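/- For the resonant trapping-state reservoir on the (4n̄+4)-dimensional truncation: for every density matrix ρ₀ ∈ Matrix (Fin (4n̄+4)) (Fin (4n̄+4)) ℂ supported above the trap, i.e. with ρ₀(a,b) = 0 unless n̄+1 ≤ a ≤ 4n̄+3 and n̄+1 ≤ b ≤ 4n̄+3, the iterates ρ_k = Φ_r^[k](ρ₀) converge entrywise, as k → ∞, to the projector |4n̄+3⟩⟨4n̄+3|. -/

import Mathlib

open Matrix
open scoped ComplexOrder

noncomputable section

/-- α(n) = π·√((n+1)/(n̄+1)) -/
def alphaAng (nbar n : ℕ) : ℝ := Real.pi * Real.sqrt (((n : ℝ) + 1) / ((nbar : ℝ) + 1))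

/-- Kraus operator M_g^r of the resonant trapping-state reservoir on dimension D. -/
def Mgr (nbar D : ℕ) : Matrix (Fin D) (Fin D) ℂ :=
  fun i j => if (i : ℕ) = (j : ℕ) + 1
    then Complex.ofReal (Real.sin (alphaAng nbar (j : ℕ)))
    else 0

/-- Kraus operator M_e^r of the resonant trapping-state reservoir on dimension D. -/
def Mer (nbar D : ℕ) : Matrix (Fin D) (Fin D) ℂ :=
  fun i j => if i = j then Complex.ofReal (Real.cos (alphaAng nbar (j : ℕ))) else 0

/-- Kraus map of the resonant trapping-state reservoir on dimension D. -/
def PhirK (nbar D : ℕ) (ρ : Matrix (Fin D) (Fin D) ℂ) : Matrix (Fin D) (Fin D) ℂ :=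
  Mgr nbar D * ρ * (Mgr nbar D)ᴴ + Mer nbar D * ρ * (Mer nbar D)ᴴ


/-! ### Auxiliary lemmas for the main theorem -/

section Aux

open Filter

/-- Geometric decay with vanishing forcing term. -/
lemma contract_tendsto (r : ℝ) (hr0 : 0 ≤ r) (hr1 : r < 1) (x u : ℕ → ℝ)
    (hx0 : ∀ k, 0 ≤ x k) (hrec : ∀ k, x (k+1) ≤ r * x k + u k)
    (hu : Tendsto u atTop (nhds 0)) : Tendsto x atTop (nhds 0) := by
  rw [Metric.tendsto_atTop]
  intro ε hε
  have h1r : 0 < 1 - r := by linarith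
  obtain ⟨N, hN⟩ := (Metric.tendsto_atTop.mp hu) (ε * (1 - r) / 2) (by positivity)
  have key : ∀ m, x (N + m) ≤ r ^ m * x N + ε / 2 := by
    intro m
    induction m with
    | zero => simpa using by nlinarith [hx0 N]
    | succ m ihm =>
      have hu' : u (N + m) ≤ ε * (1 - r) / 2 := by
        have := hN (N + m) (Nat.le_add_right _ _)
        rw [Real.dist_eq, sub_zero] at this
        exact (abs_le.mp this.le).2
      have := hrec (N + m)
      have h2 : x (N + m + 1) ≤ r * (r ^ m * x N + ε / 2) + ε * (1 - r) / 2 := by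
        nlinarith [hx0 (N + m)]
      calc x (N + (m + 1)) = x (N + m + 1) := by ring_nf
        _ ≤ r * (r ^ m * x N + ε / 2) + ε * (1 - r) / 2 := h2
        _ ≤ r ^ (m + 1) * x N + ε / 2 := by ring_nf; nlinarith
  have hpow : Tendsto (fun m => r ^ m * x N) atTop (nhds 0) := by
    simpa using (tendsto_pow_atTop_nhds_zero_of_lt_one hr0 hr1).mul_const (x N)
  obtain ⟨M, hM⟩ := (Metric.tendsto_atTop.mp hpow) (ε / 2) (by positivity)
  refine ⟨N + M, fun k hk => ?_⟩
  have hkN : k = N + (k - N) := by omega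
  have h1 : x k ≤ r ^ (k - N) * x N + ε / 2 := by
    have := key (k - N); rwa [← hkN] at this
  have h2 : r ^ (k - N) * x N < ε / 2 := by
    have := hM (k - N) (by omega)
    rw [Real.dist_eq, sub_zero] at this
    exact (abs_lt.mp this).2
  rw [Real.dist_eq, sub_zero, abs_of_nonneg (hx0 k)]
  linarith

/-- Entry facts for positive semidefinite complex matrices: real nonnegative
diagonal and the Cauchy–Schwarz bound for off-diagonal entries. -/
lemma psd_entry_facts {n : Type*} [Fintype n] [DecidableEq n] {M : Matrix n n ℂ}
    (hM : M.PosSemidef) (a b : n) :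
    M a a = ((M a a).re : ℂ) ∧ 0 ≤ (M a a).re ∧
      ‖M a b‖ ^ 2 ≤ (M a a).re * (M b b).re := by
  obtain ⟨B, rfl⟩ : ∃ B : Matrix n n ℂ, M = Bᴴ * B := by
    open scoped Matrix.Norms.L2Operator MatrixOrder in
    exact CStarAlgebra.nonneg_iff_eq_star_mul_self.mp hM.nonneg
  set u : EuclideanSpace ℂ n := WithLp.toLp 2 fun k => B k a with hu
  set v : EuclideanSpace ℂ n := WithLp.toLp 2 fun k => B k b with hv
  have hab : (Bᴴ * B) a b = inner ℂ u v := by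
    simp [Matrix.mul_apply, conjTranspose_apply, PiLp.inner_apply, RCLike.inner_apply, hu, hv, mul_comm]
  have haa : (Bᴴ * B) a a = ((‖u‖ ^ 2 : ℝ) : ℂ) := by
    rw [show (Bᴴ * B) a a = inner ℂ u u by
      rw [PiLp.inner_apply]; simp only [Matrix.mul_apply, conjTranspose_apply, RCLike.inner_apply, hu, PiLp.toLp_apply, mul_comm, Complex.star_def]]
    rw [inner_self_eq_norm_sq_to_K]; norm_cast
  have hbb : (Bᴴ * B) b b = ((‖v‖ ^ 2 : ℝ) : ℂ) := by
    rw [show (Bᴴ * B) b b = inner ℂ v v by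
      rw [PiLp.inner_apply]; simp only [Matrix.mul_apply, conjTranspose_apply, RCLike.inner_apply, hv, PiLp.toLp_apply, mul_comm, Complex.star_def]]
    rw [inner_self_eq_norm_sq_to_K]; norm_cast
  refine ⟨by rw [haa]; norm_cast, by rw [haa]; norm_cast; positivity, ?_⟩
  rw [hab, haa, hbb]
  simp only [Complex.ofReal_re]
  have := norm_inner_le_norm (𝕜 := ℂ) u v
  calc ‖(inner ℂ u v : ℂ)‖ ^ 2 ≤ (‖u‖ * ‖v‖) ^ 2 := by
        apply pow_le_pow_left₀ (norm_nonneg _) this 2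
    _ = ‖u‖ ^ 2 * ‖v‖ ^ 2 := by ring

lemma Mer_eq_diagonal (nbar D : ℕ) :
    Mer nbar D = diagonal (fun j : Fin D => (Real.cos (alphaAng nbar j) : ℂ)) := by
  ext i j
  by_cases h : i = j
  · subst h; simp [Mer, diagonal]
  · simp [Mer, diagonal, h]

lemma Me_term_apply (nbar D : ℕ) (ρ : Matrix (Fin D) (Fin D) ℂ) (a b : Fin D) :
    (Mer nbar D * ρ * (Mer nbar D)ᴴ) a b =
      (Real.cos (alphaAng nbar a) : ℂ) * (Real.cos (alphaAng nbar b) : ℂ) * ρ a b := by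
  rw [Mer_eq_diagonal, diagonal_conjTranspose]
  rw [Matrix.mul_diagonal, Matrix.diagonal_mul]
  simp only [Pi.star_apply, Complex.star_def]
  rw [Complex.conj_ofReal]
  ring

lemma Mg_mul_apply (nbar D : ℕ) (ρ : Matrix (Fin D) (Fin D) ℂ) (a i j : Fin D)
    (hai : (a : ℕ) = (i : ℕ) + 1) :
    (Mgr nbar D * ρ) a j = (Real.sin (alphaAng nbar i) : ℂ) * ρ i j := by
  rw [Matrix.mul_apply]
  rw [Finset.sum_eq_single i]
  · simp [Mgr, hai]
  · intro b _ hb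
    have : (a : ℕ) ≠ (b : ℕ) + 1 := by
      intro h; apply hb; apply Fin.ext; omega
    simp [Mgr, this]
  · simp

lemma Mg_mul_apply_zero (nbar D : ℕ) (ρ : Matrix (Fin D) (Fin D) ℂ) (a j : Fin D)
    (ha : (a : ℕ) = 0) :
    (Mgr nbar D * ρ) a j = 0 := by
  rw [Matrix.mul_apply]
  apply Finset.sum_eq_zero
  intro b _
  have : (a : ℕ) ≠ (b : ℕ) + 1 := by omega
  simp [Mgr, this]

lemma Mg_term_apply (nbar D : ℕ) (ρ : Matrix (Fin D) (Fin D) ℂ) (a b i j : Fin D)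
    (hai : (a : ℕ) = (i : ℕ) + 1) (hbj : (b : ℕ) = (j : ℕ) + 1) :
    (Mgr nbar D * ρ * (Mgr nbar D)ᴴ) a b =
      (Real.sin (alphaAng nbar i) : ℂ) * (Real.sin (alphaAng nbar j) : ℂ) * ρ i j := by
  rw [Matrix.mul_apply]
  rw [Finset.sum_eq_single j]
  · rw [Mg_mul_apply nbar D ρ a i j hai]
    simp only [Mgr, conjTranspose_apply, hbj, Complex.star_def, if_true, eq_self_iff_true]
    rw [Complex.conj_ofReal]
    ring
  · intro c _ hc
    have : (b : ℕ) ≠ (c : ℕ) + 1 := by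
      intro h; apply hc; apply Fin.ext; omega
    simp [Mgr, conjTranspose_apply, this]
  · simp

lemma Mg_term_apply_zero (nbar D : ℕ) (ρ : Matrix (Fin D) (Fin D) ℂ) (a b : Fin D)
    (h : (a : ℕ) = 0 ∨ (b : ℕ) = 0) :
    (Mgr nbar D * ρ * (Mgr nbar D)ᴴ) a b = 0 := by
  rcases h with h | h
  · rw [Matrix.mul_apply]
    apply Finset.sum_eq_zero
    intro c _
    rw [Mg_mul_apply_zero nbar D ρ a c h, zero_mul]
  · rw [Matrix.mul_apply]
    apply Finset.sum_eq_zero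
    intro c _
    have : (b : ℕ) ≠ (c : ℕ) + 1 := by omega
    simp [Mgr, conjTranspose_apply, this]

lemma alphaAng_nbar (nbar : ℕ) : alphaAng nbar nbar = Real.pi := by
  unfold alphaAng
  have h : ((nbar : ℝ) + 1) / ((nbar : ℝ) + 1) = 1 := by
    field_simp
  rw [h, Real.sqrt_one, mul_one]

lemma alphaAng_top (nbar : ℕ) : alphaAng nbar (4*nbar+3) = 2 * Real.pi := by
  unfold alphaAng
  have h : (((4*nbar+3 : ℕ) : ℝ) + 1) / ((nbar : ℝ) + 1) = 4 := by
    have : ((nbar : ℝ) + 1) ≠ 0 := by positivity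
    field_simp
    push_cast
    ring
  rw [h, show (4:ℝ) = 2^2 by norm_num, Real.sqrt_sq (by norm_num)]
  ring

lemma sin_alphaAng_nbar (nbar : ℕ) : Real.sin (alphaAng nbar nbar) = 0 := by
  rw [alphaAng_nbar]; exact Real.sin_pi

lemma sin_alphaAng_top (nbar : ℕ) : Real.sin (alphaAng nbar (4*nbar+3)) = 0 := by
  rw [alphaAng_top]; exact Real.sin_two_pi

lemma sin_alphaAng_neg (nbar n : ℕ) (h1 : nbar + 1 ≤ n) (h2 : n ≤ 4*nbar+2) :
    Real.sin (alphaAng nbar n) < 0 := by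
  have hpos : (0:ℝ) < (nbar : ℝ) + 1 := by positivity
  set t : ℝ := ((n : ℝ) + 1) / ((nbar : ℝ) + 1) with ht
  have ht1 : 1 < t := by
    rw [ht, lt_div_iff₀ hpos]
    have : (nbar : ℝ) < (n : ℝ) := by exact_mod_cast (by omega : nbar < n)
    linarith
  have ht4 : t < 4 := by
    rw [ht, div_lt_iff₀ hpos]
    have : (n : ℝ) ≤ 4 * (nbar : ℝ) + 2 := by exact_mod_cast h2
    linarith
  have hs1 : 1 < Real.sqrt t := by
    rw [show (1:ℝ) = Real.sqrt 1 by simp]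
    exact Real.sqrt_lt_sqrt (by norm_num) ht1
  have hs2 : Real.sqrt t < 2 := by
    rw [show (2:ℝ) = Real.sqrt 4 by
      rw [show (4:ℝ) = 2^2 by norm_num, Real.sqrt_sq (by norm_num)]]
    exact Real.sqrt_lt_sqrt (by linarith) ht4
  have hα : alphaAng nbar n = Real.pi * Real.sqrt t := rfl
  have hπ : 0 < Real.pi := Real.pi_pos
  have hlo : Real.pi < alphaAng nbar n := by rw [hα]; nlinarith
  have hhi : alphaAng nbar n < 2 * Real.pi := by rw [hα]; nlinarith
  have : 0 < Real.sin (alphaAng nbar n - Real.pi) := by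
    apply Real.sin_pos_of_pos_of_lt_pi <;> linarith
  rw [Real.sin_sub_pi] at this
  linarith

lemma cos_sq_lt_one (nbar n : ℕ) (h1 : nbar + 1 ≤ n) (h2 : n ≤ 4*nbar+2) :
    Real.cos (alphaAng nbar n) ^ 2 < 1 := by
  have h := sin_alphaAng_neg nbar n h1 h2
  nlinarith [Real.sin_sq_add_cos_sq (alphaAng nbar n)]

lemma kraus_sum (nbar : ℕ) :
    (Mgr nbar (4*nbar+4))ᴴ * Mgr nbar (4*nbar+4)
      + (Mer nbar (4*nbar+4))ᴴ * Mer nbar (4*nbar+4) = 1 := by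
  ext i j
  by_cases hij : i = j
  · subst hij
    rw [Matrix.add_apply, Matrix.one_apply_eq i]
    have hme : ((Mer nbar (4*nbar+4))ᴴ * Mer nbar (4*nbar+4)) i i
        = (Real.cos (alphaAng nbar i) : ℂ) ^ 2 := by
      rw [Matrix.mul_apply, Finset.sum_eq_single i]
      · simp only [conjTranspose_apply, Mer, if_pos rfl, Complex.star_def, if_true]
        rw [Complex.conj_ofReal]
        ring
      · intro b _ hb
        simp [Mer, conjTranspose_apply, hb]
      · simp
    have hmg : ((Mgr nbar (4*nbar+4))ᴴ * Mgr nbar (4*nbar+4)) i i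
        = (Real.sin (alphaAng nbar i) : ℂ) ^ 2 := by
      by_cases h : (i : ℕ) + 1 < 4*nbar+4
      · rw [Matrix.mul_apply, Finset.sum_eq_single (⟨(i:ℕ)+1, h⟩ : Fin (4*nbar+4))]
        · simp only [conjTranspose_apply, Mgr, Complex.star_def, if_true, eq_self_iff_true]
          rw [Complex.conj_ofReal]
          ring
        · intro b _ hb
          have : (b : ℕ) ≠ (i : ℕ) + 1 := by
            intro hc; apply hb; apply Fin.ext; exact hc
          simp [Mgr, conjTranspose_apply, this]
        · simp
      · have hi : (i : ℕ) = 4*nbar+3 := by omega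
        have hz : Real.sin (alphaAng nbar i) = 0 := by rw [hi]; exact sin_alphaAng_top nbar
        rw [Matrix.mul_apply, Finset.sum_eq_zero, hz]
        · simp
        · intro b _
          have : (b : ℕ) ≠ (i : ℕ) + 1 := by omega
          simp [Mgr, conjTranspose_apply, this]
    rw [hme, hmg]
    have h1 := Real.sin_sq_add_cos_sq (alphaAng nbar (i : ℕ))
    rw [← Complex.ofReal_pow, ← Complex.ofReal_pow, ← Complex.ofReal_add, h1,
      Complex.ofReal_one]
  · rw [Matrix.add_apply, Matrix.one_apply_ne hij]
    have hmg : ((Mgr nbar (4*nbar+4))ᴴ * Mgr nbar (4*nbar+4)) i j = 0 := by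
      rw [Matrix.mul_apply]
      apply Finset.sum_eq_zero
      intro b _
      by_cases hb : (b : ℕ) = (i : ℕ) + 1
      · have : (b : ℕ) ≠ (j : ℕ) + 1 := by
          intro hc
          apply hij; apply Fin.ext; omega
        simp [Mgr, conjTranspose_apply, this]
      · simp [Mgr, conjTranspose_apply, hb]
    have hme : ((Mer nbar (4*nbar+4))ᴴ * Mer nbar (4*nbar+4)) i j = 0 := by
      rw [Matrix.mul_apply]
      apply Finset.sum_eq_zero
      intro b _
      by_cases hb : b = i
      · have : b ≠ j := by rw [hb]; exact hij
        simp [Mer, conjTranspose_apply, this]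
      · simp [Mer, conjTranspose_apply, hb]
    rw [hmg, hme, add_zero]

lemma trace_PhirK (nbar : ℕ) (ρ : Matrix (Fin (4*nbar+4)) (Fin (4*nbar+4)) ℂ) :
    (PhirK nbar (4*nbar+4) ρ).trace = ρ.trace := by
  unfold PhirK
  rw [Matrix.trace_add,
    Matrix.trace_mul_cycle (Mgr nbar (4*nbar+4)) ρ (Mgr nbar (4*nbar+4))ᴴ,
    Matrix.trace_mul_cycle (Mer nbar (4*nbar+4)) ρ (Mer nbar (4*nbar+4))ᴴ,
    ← Matrix.trace_add, ← Matrix.add_mul, kraus_sum, Matrix.one_mul]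

lemma posSemidef_PhirK (nbar D : ℕ) {ρ : Matrix (Fin D) (Fin D) ℂ}
    (hρ : ρ.PosSemidef) : (PhirK nbar D ρ).PosSemidef :=
  (hρ.mul_mul_conjTranspose_same _).add (hρ.mul_mul_conjTranspose_same _)

lemma supp_PhirK (nbar : ℕ) (ρ : Matrix (Fin (4*nbar+4)) (Fin (4*nbar+4)) ℂ)
    (h : ∀ a b : Fin (4*nbar+4),
      ¬(nbar + 1 ≤ (a : ℕ) ∧ (a : ℕ) ≤ 4*nbar+3 ∧ nbar + 1 ≤ (b : ℕ) ∧ (b : ℕ) ≤ 4*nbar+3) →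
      ρ a b = 0) :
    ∀ a b : Fin (4*nbar+4),
      ¬(nbar + 1 ≤ (a : ℕ) ∧ (a : ℕ) ≤ 4*nbar+3 ∧ nbar + 1 ≤ (b : ℕ) ∧ (b : ℕ) ≤ 4*nbar+3) →
      PhirK nbar (4*nbar+4) ρ a b = 0 := by
  intro a b hab
  unfold PhirK
  rw [Matrix.add_apply, Me_term_apply, h a b hab, mul_zero, add_zero]
  by_cases hz : (a : ℕ) = 0 ∨ (b : ℕ) = 0
  · rw [Mg_term_apply_zero nbar _ ρ a b hz]
  · push_neg at hz
    have ha1 : 1 ≤ (a : ℕ) := by omega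
    have hb1 : 1 ≤ (b : ℕ) := by omega
    have hi : (a : ℕ) - 1 < 4*nbar+4 := by have := a.isLt; omega
    have hj : (b : ℕ) - 1 < 4*nbar+4 := by have := b.isLt; omega
    rw [Mg_term_apply nbar _ ρ a b ⟨(a:ℕ)-1, hi⟩ ⟨(b:ℕ)-1, hj⟩
      (by show (a:ℕ) = (a:ℕ) - 1 + 1; omega) (by show (b:ℕ) = (b:ℕ) - 1 + 1; omega)]
    have hzero : ρ ⟨(a:ℕ)-1, hi⟩ ⟨(b:ℕ)-1, hj⟩ = 0 := by
      apply h
      intro hblk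
      apply hab
      have h1 : nbar + 1 ≤ (a:ℕ) - 1 := hblk.1
      have h3 : nbar + 1 ≤ (b:ℕ) - 1 := hblk.2.2.1
      have hA := a.isLt
      have hB := b.isLt
      exact ⟨by omega, by omega, by omega, by omega⟩
    rw [hzero, mul_zero]

end Aux

/-- on the (4n̄+4)-dimensional truncation, the resonant trapping-state
reservoir drives every density matrix supported above the trap (levels n̄+1,…,4n̄+3)
entrywise to |4n̄+3⟩⟨4n̄+3|. -/
theorem trapping_state_divergence_above (nbar : ℕ)
    (ρ₀ : Matrix (Fin (4*nbar+4)) (Fin (4*nbar+4)) ℂ)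
    (hpsd : ρ₀.PosSemidef) (htr : ρ₀.trace = 1)
    (hsupp : ∀ a b : Fin (4*nbar+4),
      ¬(nbar + 1 ≤ (a : ℕ) ∧ (a : ℕ) ≤ 4*nbar+3 ∧ nbar + 1 ≤ (b : ℕ) ∧ (b : ℕ) ≤ 4*nbar+3) →
      ρ₀ a b = 0) :
    ∀ a b : Fin (4*nbar+4),
      Filter.Tendsto (fun k => (PhirK nbar (4*nbar+4))^[k] ρ₀ a b) Filter.atTop
        (nhds (Matrix.single (⟨4*nbar+3, by omega⟩ : Fin (4*nbar+4))
          (⟨4*nbar+3, by omega⟩ : Fin (4*nbar+4)) 1 a b)) := by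
  
  intro a b
  set ρs : ℕ → Matrix (Fin (4*nbar+4)) (Fin (4*nbar+4)) ℂ :=
    fun k => (PhirK nbar (4*nbar+4))^[k] ρ₀ with hρs
  have hstep : ∀ k, ρs (k+1) = PhirK nbar (4*nbar+4) (ρs k) := by
    intro k; rw [hρs]; exact Function.iterate_succ_apply' _ _ _
  have Hpsd : ∀ k, (ρs k).PosSemidef := by
    intro k; induction k with
    | zero => exact hpsd
    | succ k ih => rw [hstep]; exact posSemidef_PhirK _ _ ih
  have Htr : ∀ k, (ρs k).trace = 1 := by
    intro k; induction k with
    | zero => exact htr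
    | succ k ih => rw [hstep, trace_PhirK]; exact ih
  have Hsupp : ∀ k, ∀ x y : Fin (4*nbar+4),
      ¬(nbar + 1 ≤ (x : ℕ) ∧ (x : ℕ) ≤ 4*nbar+3 ∧ nbar + 1 ≤ (y : ℕ) ∧ (y : ℕ) ≤ 4*nbar+3) →
      ρs k x y = 0 := by
    intro k; induction k with
    | zero => exact hsupp
    | succ k ih => intro x y hxy; rw [hstep]; exact supp_PhirK nbar (ρs k) ih x y hxy
  set d : ℕ → Fin (4*nbar+4) → ℝ := fun k x => ((ρs k) x x).re with hd
  have hreal : ∀ k x, ρs k x x = ((d k x : ℝ) : ℂ) := fun k x =>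
    (psd_entry_facts (Hpsd k) x x).1
  have hd0 : ∀ k x, 0 ≤ d k x := fun k x => (psd_entry_facts (Hpsd k) x x).2.1
  have hCS : ∀ k x y, ‖ρs k x y‖^2 ≤ d k x * d k y := fun k x y =>
    (psd_entry_facts (Hpsd k) x y).2.2
  have hsum : ∀ k, ∑ x, d k x = 1 := by
    intro k
    have h1 := Htr k
    have h2 : (∑ x, ρs k x x) = 1 := by
      rw [← h1]; simp [Matrix.trace, Matrix.diag]
    have := congrArg Complex.re h2
    rw [Complex.re_sum] at this
    simpa using this
  have hdle1 : ∀ k x, d k x ≤ 1 := by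
    intro k x
    rw [← hsum k]
    exact Finset.single_le_sum (fun y _ => hd0 k y) (Finset.mem_univ x)
  -- decay of all diagonal entries below the top level
  have hdecay : ∀ n : ℕ, n ≤ 4*nbar+2 → ∀ x : Fin (4*nbar+4), (x:ℕ) = n →
      Filter.Tendsto (fun k => d k x) Filter.atTop (nhds 0) := by
    intro n
    induction n using Nat.strong_induction_on with
    | _ n ih =>
      intro hn x hx
      by_cases hlow : n ≤ nbar
      · have hz : ∀ k, d k x = 0 := by
          intro k
          have hzz := Hsupp k x x (by omega)
          show (ρs k x x).re = 0
          rw [hzz]; simp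
        have : (fun k => d k x) = fun _ => (0:ℝ) := funext hz
        rw [this]; exact tendsto_const_nhds
      · push_neg at hlow
        have hn1 : 1 ≤ n := by omega
        set i : Fin (4*nbar+4) := ⟨n-1, by omega⟩ with hi
        have hrec : ∀ k, d (k+1) x =
            Real.cos (alphaAng nbar n)^2 * d k x
              + Real.sin (alphaAng nbar (n-1))^2 * d k i := by
          intro k
          have hme := Me_term_apply nbar (4*nbar+4) (ρs k) x x
          have hmg := Mg_term_apply nbar (4*nbar+4) (ρs k) x x i i
            (by show (x:ℕ) = n - 1 + 1; omega) (by show (x:ℕ) = n - 1 + 1; omega)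
          have hiv : (i : ℕ) = n - 1 := rfl
          have hc : ρs (k+1) x x =
              (Real.sin (alphaAng nbar (n-1)) : ℂ) * (Real.sin (alphaAng nbar (n-1)) : ℂ) * ρs k i i
                + (Real.cos (alphaAng nbar n) : ℂ) * (Real.cos (alphaAng nbar n) : ℂ) * ρs k x x := by
            rw [hstep]
            show (Mgr nbar (4*nbar+4) * ρs k * (Mgr nbar (4*nbar+4))ᴴ
              + Mer nbar (4*nbar+4) * ρs k * (Mer nbar (4*nbar+4))ᴴ) x x = _
            rw [Matrix.add_apply, hme, hmg, hiv, hx]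
          show (ρs (k+1) x x).re = _
          rw [hc, hreal k x, hreal k i]
          rw [show ((Real.sin (alphaAng nbar (n-1)) : ℂ) * (Real.sin (alphaAng nbar (n-1)) : ℂ)
              * ((d k i : ℝ) : ℂ)
              + (Real.cos (alphaAng nbar n) : ℂ) * (Real.cos (alphaAng nbar n) : ℂ)
              * ((d k x : ℝ) : ℂ))
            = ((Real.cos (alphaAng nbar n)^2 * d k x
              + Real.sin (alphaAng nbar (n-1))^2 * d k i : ℝ) : ℂ) by push_cast; ring]
          rw [Complex.ofReal_re]
        have hu : Filter.Tendsto (fun k => Real.sin (alphaAng nbar (n-1))^2 * d k i)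
            Filter.atTop (nhds 0) := by
          by_cases hlow2 : n - 1 ≤ nbar
          · have hz : ∀ k, d k i = 0 := by
              intro k
              have hzz := Hsupp k i i (by
                have hiv : (i : ℕ) = n - 1 := rfl
                omega)
              show (ρs k i i).re = 0
              rw [hzz]; simp
            have : (fun k => Real.sin (alphaAng nbar (n-1))^2 * d k i) = fun _ => (0:ℝ) := by
              funext k; rw [hz k, mul_zero]
            rw [this]; exact tendsto_const_nhds
          · have hih := ih (n-1) (by omega) (by omega) i rfl
            simpa using hih.const_mul (Real.sin (alphaAng nbar (n-1))^2)
        exact contract_tendsto (Real.cos (alphaAng nbar n)^2) (sq_nonneg _)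
          (cos_sq_lt_one nbar n (by omega) (by omega)) (fun k => d k x) _
          (fun k => hd0 k x) (fun k => le_of_eq (hrec k)) hu
  set top : Fin (4*nbar+4) := ⟨4*nbar+3, by omega⟩ with htop
  have hd_top : Filter.Tendsto (fun k => d k top) Filter.atTop (nhds 1) := by
    have hsplit : ∀ k, d k top = 1 - ∑ x ∈ Finset.univ.erase top, d k x := by
      intro k
      have h1 := hsum k
      rw [← Finset.add_sum_erase _ _ (Finset.mem_univ top)] at h1
      linarith
    have hsum0 : Filter.Tendsto (fun k => ∑ x ∈ Finset.univ.erase top, d k x)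
        Filter.atTop (nhds 0) := by
      have h := tendsto_finset_sum (f := fun x k => d k x) (Finset.univ.erase top)
        (fun x hx => by
          have hxne : x ≠ top := Finset.ne_of_mem_erase hx
          have hxv : (x : ℕ) ≠ 4*nbar+3 := by
            intro hc; apply hxne; apply Fin.ext; rw [hc]
          have hxlt := x.isLt
          exact hdecay (x : ℕ) (by omega) x rfl)
      simpa using h
    have : (fun k => d k top) = fun k => 1 - ∑ x ∈ Finset.univ.erase top, d k x :=
      funext hsplit
    rw [this]
    have := tendsto_const_nhds (x := (1:ℝ)) (f := Filter.atTop (α := ℕ)) |>.sub hsum0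
    simpa using this
  by_cases hab : a = top ∧ b = top
  · obtain ⟨ha, hb⟩ := hab
    subst ha; subst hb
    have hstd : Matrix.single top top (1:ℂ) top top = 1 := by
      simp [Matrix.single]
    rw [hstd]
    have heq : (fun k => ρs k top top) = fun k => ((d k top : ℝ) : ℂ) :=
      funext fun k => hreal k top
    show Filter.Tendsto (fun k => ρs k top top) Filter.atTop (nhds 1)
    rw [heq]
    have := (Complex.continuous_ofReal.tendsto 1).comp hd_top
    simpa [Function.comp_def] using this
  · have hstd : Matrix.single top top (1:ℂ) a b = 0 := by
      simp only [Matrix.single, Matrix.of_apply]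
      rw [if_neg]
      intro ⟨h1, h2⟩
      exact hab ⟨h1.symm, h2.symm⟩
    rw [hstd]
    show Filter.Tendsto (fun k => ρs k a b) Filter.atTop (nhds 0)
    have key : ∃ x : Fin (4*nbar+4), (x:ℕ) ≤ 4*nbar+2 ∧ ∀ k, ‖ρs k a b‖^2 ≤ d k x := by
      by_cases ha : (a:ℕ) = 4*nbar+3
      · have hb : (b:ℕ) ≠ 4*nbar+3 := by
          intro hc
          apply hab
          constructor <;> (apply Fin.ext; simp [htop]; omega)
        have hblt := b.isLt
        refine ⟨b, by omega, fun k => ?_⟩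
        calc ‖ρs k a b‖^2 ≤ d k a * d k b := hCS k a b
          _ ≤ 1 * d k b := by nlinarith [hdle1 k a, hd0 k a, hd0 k b]
          _ = d k b := one_mul _
      · have halt := a.isLt
        refine ⟨a, by omega, fun k => ?_⟩
        calc ‖ρs k a b‖^2 ≤ d k a * d k b := hCS k a b
          _ ≤ d k a * 1 := by nlinarith [hdle1 k b, hd0 k a, hd0 k b]
          _ = d k a := mul_one _
    obtain ⟨x, hx2, hbd⟩ := key
    rw [tendsto_zero_iff_norm_tendsto_zero]
    apply squeeze_zero (fun k => norm_nonneg _)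
      (g := fun k => Real.sqrt (d k x))
      (fun k => Real.le_sqrt_of_sq_le (hbd k))
    have hx0 := hdecay (x : ℕ) hx2 x rfl
    have := (Real.continuous_sqrt.tendsto 0).comp hx0
    simpa [Function.comp_def] using this
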